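/- For every real s with 0 < s < 1, we have 2/(s-1)^3 + ∫₀¹ t^{-s} (log t)^2 / (1 - t) dt = ∑_{n=2}^∞ 2/(n - s)^3. -/

import Mathlib

open MeasureTheory Set Real Filter

lemma bdd_aux {r : ℝ} (hr : 0 < r) : ∃ M : ℝ, ∀ t ∈ Set.Ioc (0:ℝ) 1,
    |Real.log t * t ^ r| ≤ M := by
  have h := tendsto_log_mul_rpow_nhdsGT_zero hr
  have h2 : ∀ᶠ t in nhdsWithin (0:ℝ) (Set.Ioi 0), |Real.log t * t ^ r| ≤ 1 := by
    have := h.abs.eventually_le_const (show |(0:ℝ)| < 1 by norm_num)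
    simpa using this
  rw [eventually_nhdsWithin_iff, Metric.eventually_nhds_iff] at h2
  obtain ⟨δ, hδ, hδ'⟩ := h2
  set ε : ℝ := min (δ/2) 1 with hε_def
  have hε : 0 < ε := lt_min (by linarith) one_pos
  have hε1 : ε ≤ 1 := min_le_right _ _
  have hcomp : IsCompact (Set.Icc ε 1) := isCompact_Icc
  have hcont : ContinuousOn (fun t : ℝ => Real.log t * t ^ r) (Set.Icc ε 1) := by
    apply ContinuousOn.mul
    · exact Real.continuousOn_log.mono (fun t ht => by
        simp only [Set.mem_compl_iff, Set.mem_singleton_iff]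
        exact ne_of_gt (lt_of_lt_of_le hε ht.1))
    · exact ContinuousOn.rpow_const continuousOn_id
        (fun t ht => Or.inl (ne_of_gt (lt_of_lt_of_le hε ht.1)))
  obtain ⟨M₀, hM₀⟩ := hcomp.exists_bound_of_continuousOn hcont
  refine ⟨max 1 M₀, fun t ht => ?_⟩
  rcases lt_or_ge t ε with h | h
  · refine le_trans ?_ (le_max_left _ _)
    apply hδ'
    · rw [Real.dist_eq, sub_zero, abs_of_pos ht.1]
      exact h.trans_le ((min_le_left _ _).trans (by linarith))
    · exact ht.1
  · refine le_trans ?_ (le_max_right _ _)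
    have := hM₀ t ⟨h, ht.2⟩
    rwa [Real.norm_eq_abs] at this

lemma integrable_aux {a : ℝ} (ha : -1 < a) :
    IntegrableOn (fun t : ℝ => t ^ a * (Real.log t)^2) (Set.Ioo (0:ℝ) 1) := by
  have hc : 0 < a + 1 := by linarith
  set r : ℝ := (a+1)/2 with hr_def
  have hr : 0 < r := by positivity
  obtain ⟨M, hM⟩ := bdd_aux (show 0 < r/2 by positivity)
  have hmeas : AEStronglyMeasurable (fun t : ℝ => t ^ a * (Real.log t)^2)
      (volume.restrict (Set.Ioo (0:ℝ) 1)) := by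
    apply ContinuousOn.aestronglyMeasurable _ measurableSet_Ioo
    apply ContinuousOn.mul
    · exact ContinuousOn.rpow_const continuousOn_id (fun t ht => Or.inl (ne_of_gt ht.1))
    · exact (Real.continuousOn_log.mono (fun t ht => by
        simp only [Set.mem_compl_iff, Set.mem_singleton_iff]; exact ne_of_gt ht.1)).pow 2
  have hgint : IntegrableOn (fun t : ℝ => M^2 * t ^ (a - r)) (Set.Ioo (0:ℝ) 1) :=
    ((intervalIntegral.integrableOn_Ioo_rpow_iff one_pos).mpr (by rw [hr_def]; linarith)).const_mul _
  apply Integrable.mono' hgint hmeas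
  refine (ae_restrict_iff' measurableSet_Ioo).mpr (Filter.Eventually.of_forall fun t ht => ?_)
  have ht0 : 0 < t := ht.1
  have key : t ^ a * (Real.log t)^2 = t ^ (a - r) * (Real.log t * t ^ (r/2))^2 := by
    rw [mul_pow, ← Real.rpow_natCast (t ^ (r/2)) 2, ← Real.rpow_mul ht0.le]
    rw [show (r/2) * (2:ℕ) = r by push_cast; ring, ← mul_assoc, mul_comm (t ^ (a-r)) _,
      mul_assoc, ← Real.rpow_add ht0]
    ring_nf
  rw [Real.norm_of_nonneg (by positivity), key]
  have h1 : (Real.log t * t ^ (r/2))^2 ≤ M^2 := by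
    rw [← sq_abs]
    exact pow_le_pow_left₀ (abs_nonneg _) (hM t ⟨ht0, ht.2.le⟩) 2
  calc t ^ (a - r) * (Real.log t * t ^ (r/2))^2 ≤ t ^ (a - r) * M^2 := by
        exact mul_le_mul_of_nonneg_left h1 (Real.rpow_nonneg ht0.le _)
    _ = M^2 * t ^ (a - r) := by ring

lemma integral_aux {a : ℝ} (ha : -1 < a) :
    ∫ t in Set.Ioo (0:ℝ) 1, t ^ a * (Real.log t)^2 = 2/(a+1)^3 := by
  have hc : 0 < a + 1 := by linarith
  set c : ℝ := a + 1 with hc_def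
  have hcne : c ≠ 0 := ne_of_gt hc
  have h1 : ∫ t in Set.Ioo (0:ℝ) 1, t ^ a * (Real.log t)^2
      = ∫ t in (0:ℝ)..1, t ^ a * (Real.log t)^2 := by
    rw [intervalIntegral.integral_of_le zero_le_one, MeasureTheory.integral_Ioc_eq_integral_Ioo]
  rw [h1]
  have hint : IntervalIntegrable (fun t : ℝ => t ^ a * (Real.log t)^2) volume 0 1 := by
    rw [intervalIntegrable_iff_integrableOn_Ioo_of_le zero_le_one]
    exact integrable_aux ha
  set F : ℝ → ℝ := fun t => t ^ c * ((Real.log t)^2/c - 2*Real.log t/c^2 + 2/c^3) with hF_def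
  have hderiv : ∀ t ∈ Set.Ioo (0:ℝ) 1, HasDerivAt F (t ^ a * (Real.log t)^2) t := by
    intro t ht
    have ht0 : 0 < t := ht.1
    have hlog : HasDerivAt Real.log t⁻¹ t := Real.hasDerivAt_log (ne_of_gt ht0)
    have hlog2 : HasDerivAt (fun x : ℝ => (Real.log x)^2) ((2:ℕ) * Real.log t ^ 1 * t⁻¹) t :=
      hlog.pow 2
    have hrpow : HasDerivAt (fun x : ℝ => x ^ c) (c * t ^ (c-1)) t :=
      Real.hasDerivAt_rpow_const (Or.inl (ne_of_gt ht0))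
    have hinner : HasDerivAt (fun x : ℝ => (Real.log x)^2/c - 2*Real.log x/c^2 + 2/c^3)
        ((2:ℕ) * Real.log t ^ 1 * t⁻¹/c - 2*t⁻¹/c^2 + 0) t := by
      simpa using ((hlog2.div_const c).sub ((hlog.const_mul 2).div_const (c^2))).add_const (2/c^3)
    have htot := hrpow.mul hinner
    convert htot using 1
    case e'_4 | e'_5 | e'_8 => rfl
    have hca : c - 1 = a := by rw [hc_def]; ring
    have htc : t ^ c = t ^ a * t := by
      rw [hc_def, Real.rpow_add ht0, Real.rpow_one]
    rw [hca, htc]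
    have htne : t ≠ 0 := ne_of_gt ht0
    field_simp
    ring
  have h0 : Filter.Tendsto F (nhdsWithin 0 (Set.Ioi (0:ℝ))) (nhds 0) := by
    have heq : ∀ᶠ t in nhdsWithin 0 (Set.Ioi (0:ℝ)),
        (Real.log t * t ^ (c/2))^2/c - (Real.log t * t ^ c)*(2/c^2) + t ^ c*(2/c^3) = F t := by
      filter_upwards [self_mem_nhdsWithin] with t (ht : (0:ℝ) < t)
      rw [hF_def]
      have : (Real.log t * t ^ (c/2))^2 = (Real.log t)^2 * t ^ c := by
        rw [mul_pow, ← Real.rpow_natCast (t ^ (c/2)) 2, ← Real.rpow_mul ht.le,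
          show (c/2) * (2:ℕ) = c by push_cast; ring]
      rw [this]
      ring
    apply Filter.Tendsto.congr' heq
    have hpow : Filter.Tendsto (fun t : ℝ => t ^ c) (nhdsWithin 0 (Set.Ioi (0:ℝ))) (nhds 0) := by
      have : Filter.Tendsto (fun t : ℝ => t ^ c) (nhds 0) (nhds ((0:ℝ) ^ c)) :=
        (Real.continuousAt_rpow_const 0 c (Or.inr hc.le)).tendsto
      rw [Real.zero_rpow hcne] at this
      exact this.mono_left nhdsWithin_le_nhds
    have h1' := tendsto_log_mul_rpow_nhdsGT_zero (show 0 < c/2 by positivity)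
    have h2' := tendsto_log_mul_rpow_nhdsGT_zero hc
    have := (((h1'.pow 2).div_const c).sub (h2'.mul_const (2/c^2))).add (hpow.mul_const (2/c^3))
    simpa using this
  have h1' : Filter.Tendsto F (nhdsWithin 1 (Set.Iio (1:ℝ))) (nhds (2/c^3)) := by
    have hcont : ContinuousAt F 1 := by
      apply ContinuousAt.mul
      · exact Real.continuousAt_rpow_const 1 c (Or.inl one_ne_zero)
      · have hl : ContinuousAt Real.log 1 := Real.continuousAt_log one_ne_zero
        exact (((hl.pow 2).div_const c).sub ((hl.const_mul 2).div_const (c^2))).add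
          continuousAt_const
    have hF1 : F 1 = 2/c^3 := by
      simp [hF_def, Real.log_one, Real.one_rpow]
    rw [← hF1]
    exact hcont.continuousWithinAt.tendsto
  rw [intervalIntegral.integral_eq_sub_of_hasDerivAt_of_tendsto zero_lt_one hderiv hint h0 h1']
  ring

lemma summable_aux {s : ℝ} (hs : 0 < s) (hs1 : s < 1) :
    Summable (fun n : ℕ => 2/((n:ℝ) - s + 1)^3) := by
  have h1 : Summable (fun n : ℕ => (2/(1-s)^3) * (1/((n:ℝ)+1)^3)) := by
    apply Summable.mul_left
    have : Summable (fun n : ℕ => 1/(n:ℝ)^3) :=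
      Real.summable_one_div_nat_pow.mpr (by norm_num)
    have := (summable_nat_add_iff 1).mpr this
    exact this.congr (fun n => by push_cast; ring)
  apply Summable.of_nonneg_of_le _ _ h1
  · intro n
    have hn : (0:ℝ) ≤ (n:ℝ) := n.cast_nonneg
    have : (0:ℝ) < (n:ℝ) - s + 1 := by linarith
    positivity
  · intro n
    have hn : (0:ℝ) ≤ (n:ℝ) := n.cast_nonneg
    have h2 : (0:ℝ) < 1 - s := by linarith
    have key : (1-s)*((n:ℝ)+1) ≤ (n:ℝ) - s + 1 := by nlinarith
    have hpos : (0:ℝ) < (1-s)*((n:ℝ)+1) := by positivity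
    calc 2/((n:ℝ) - s + 1)^3 ≤ 2/((1-s)*((n:ℝ)+1))^3 := by
          gcongr
      _ = (2/(1-s)^3) * (1/((n:ℝ)+1)^3) := by
          rw [mul_pow, ← div_div, div_eq_mul_one_div]

theorem stmt_2 (s : ℝ) (hs : 0 < s) (hs1 : s < 1) :
    2 / (s - 1)^3 + ∫ t in Set.Ioo (0:ℝ) 1, t ^ (-s) * (Real.log t)^2 / (1 - t) =
      ∑' n : ℕ, 2 / (((n : ℝ) + 2) - s)^3 := by
  have hexp : ∀ n : ℕ, (-1:ℝ) < (n:ℝ) - s := by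
    intro n
    have : (0:ℝ) ≤ (n:ℝ) := n.cast_nonneg
    linarith
  set f : ℕ → ℝ → ℝ := fun n t => t ^ ((n:ℝ) - s) * (Real.log t)^2 with hf_def
  have hint : ∀ n, IntegrableOn (f n) (Set.Ioo (0:ℝ) 1) := fun n => integrable_aux (hexp n)
  have hval : ∀ n, ∫ t in Set.Ioo (0:ℝ) 1, f n t = 2/((n:ℝ) - s + 1)^3 :=
    fun n => integral_aux (hexp n)
  have hsum := summable_aux hs hs1
  have hnorm : ∀ n, (∫ t in Set.Ioo (0:ℝ) 1, ‖f n t‖) = 2/((n:ℝ) - s + 1)^3 := by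
    intro n
    rw [← hval n]
    apply MeasureTheory.setIntegral_congr_fun measurableSet_Ioo
    intro t ht
    exact Real.norm_of_nonneg (mul_nonneg (Real.rpow_nonneg ht.1.le _) (by positivity))
  have key : ∑' n, ∫ t in Set.Ioo (0:ℝ) 1, f n t = ∫ t in Set.Ioo (0:ℝ) 1, ∑' n, f n t :=
    MeasureTheory.integral_tsum_of_summable_integral_norm hint
      (hsum.congr (fun n => (hnorm n).symm))
  have hpt : ∀ t ∈ Set.Ioo (0:ℝ) 1, ∑' n, f n t = t ^ (-s) * (Real.log t)^2 / (1 - t) := by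
    intro t ht
    have ht0 : 0 < t := ht.1
    have ht1 : t < 1 := ht.2
    have heq : ∀ n : ℕ, f n t = (t ^ (-s) * (Real.log t)^2) * t ^ n := by
      intro n
      rw [hf_def]
      simp only
      rw [show (n:ℝ) - s = -s + (n:ℝ) by ring, Real.rpow_add ht0, Real.rpow_natCast]
      ring
    rw [tsum_congr heq, tsum_mul_left, tsum_geometric_of_lt_one ht0.le ht1, div_eq_mul_inv]
  have hintegral : ∫ t in Set.Ioo (0:ℝ) 1, t ^ (-s) * (Real.log t)^2 / (1 - t)
      = ∑' n : ℕ, 2/((n:ℝ) - s + 1)^3 := by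
    rw [← tsum_congr hval, key]
    apply MeasureTheory.setIntegral_congr_fun measurableSet_Ioo
    intro t ht
    exact (hpt t ht).symm
  rw [hintegral, Summable.tsum_eq_zero_add hsum]
  have h1 : ∑' (n : ℕ), 2/(((((n:ℕ)+1:ℕ)):ℝ) - s + 1)^3 = ∑' (n : ℕ), 2/(((n:ℝ) + 2) - s)^3 :=
    tsum_congr (fun n => by push_cast; ring_nf)
  rw [h1]
  have h4 : (s - 1)^3 = -((1 - s)^3) := by ring
  rw [h4, div_neg, Nat.cast_zero, show (0:ℝ) - s + 1 = 1 - s by ring]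
  ring
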